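/- Let H_A and H_B be finite-dimensional Hilbert spaces, ρ a density operator on H_A ⊗ H_B, and {Π_k^A ⊗ Π_k^B}_k a family of mutually orthogonal rank-one product projectors. Then for every k with Tr[ρ(Π_k^A ⊗ Π_k^B)] ≠ 0, the Hofer-Szabó–Vecsernyés screening-off condition Tr[ρ C_k A B C_k]·Tr[ρ C_k] = Tr[ρ C_k A C_k]·Tr[ρ C_k B C_k] holds for all commuting local observables A = A₀ ⊗ I and B = I ⊗ B₀, where C_k = Π_k^A ⊗ Π_k^B. In particular this holds for any state ρ, including entangled states. -/

import Mathlib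

open Matrix Kronecker
open scoped ComplexOrder

def proj {n : Type*} [Fintype n] (v : n → ℂ) : Matrix n n ℂ :=
  Matrix.of fun i j => v i * star (v j)

lemma proj_mul_proj {n : Type*} [Fintype n] (v : n → ℂ) (M : Matrix n n ℂ) :
    proj v * M * proj v = (∑ i, ∑ j, star (v i) * M i j * v j) • proj v := by
  ext i j
  simp only [proj, Matrix.mul_apply, of_apply, Matrix.smul_apply, smul_eq_mul,
    Finset.sum_mul, Finset.mul_sum]
  rw [Finset.sum_comm]
  apply Finset.sum_congr rfl
  intro x _
  apply Finset.sum_congr rfl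
  intro y _
  ring

lemma proj_mul_self {n : Type*} [Fintype n] (v : n → ℂ)
    (hv : ∑ i, star (v i) * v i = 1) : proj v * proj v = proj v := by
  ext i j
  simp only [proj, Matrix.mul_apply, of_apply]
  calc ∑ x, v i * star (v x) * (v x * star (v j))
      = (∑ x, star (v x) * v x) * (v i * star (v j)) := by
        rw [Finset.sum_mul]; exact Finset.sum_congr rfl fun x _ => by ring
    _ = v i * star (v j) := by rw [hv, one_mul]

/-- For any density operator ρ on H_A ⊗ H_B and a family of
mutually orthogonal rank-one product projectors C_k = |a_k⟩⟨a_k| ⊗ |b_k⟩⟨b_k|,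
every C_k with Tr[ρ C_k] ≠ 0 satisfies the Hofer-Szabó–Vecsernyés screening-off
condition (in multiplicative form) for all commuting local observables
A = A₀ ⊗ I, B = I ⊗ B₀. -/
theorem stmt2 {m n : ℕ} {K : Type*} [Fintype K]
    (ρ : Matrix (Fin m × Fin n) (Fin m × Fin n) ℂ)
    (hρ : ρ.PosSemidef) (hρtr : ρ.trace = 1)
    (a : K → (Fin m → ℂ)) (b : K → (Fin n → ℂ))
    (ha : ∀ k, ∑ i, star (a k i) * a k i = 1)
    (hb : ∀ k, ∑ j, star (b k j) * b k j = 1)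
    (C : K → Matrix (Fin m × Fin n) (Fin m × Fin n) ℂ)
    (hC : ∀ k, C k = proj (a k) ⊗ₖ proj (b k))
    (horth : ∀ j k, j ≠ k → C j * C k = 0) :
    ∀ k, (ρ * C k).trace ≠ 0 →
      ∀ (A₀ : Matrix (Fin m) (Fin m) ℂ) (B₀ : Matrix (Fin n) (Fin n) ℂ)
        (A B : Matrix (Fin m × Fin n) (Fin m × Fin n) ℂ),
        A = A₀ ⊗ₖ (1 : Matrix (Fin n) (Fin n) ℂ) →
        B = (1 : Matrix (Fin m) (Fin m) ℂ) ⊗ₖ B₀ →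
        (ρ * (C k * A * B * C k)).trace * (ρ * C k).trace =
          (ρ * (C k * A * C k)).trace * (ρ * (C k * B * C k)).trace := by
  intro k hk A₀ B₀ A B hA hB
  subst hA hB
  rw [hC]
  set P := proj (a k)
  set Q := proj (b k)
  set α := ∑ i, ∑ j, star (a k i) * A₀ i j * a k j with hα
  set β := ∑ i, ∑ j, star (b k i) * B₀ i j * b k j with hβ
  have hAB : (P ⊗ₖ Q) * (A₀ ⊗ₖ 1) * (1 ⊗ₖ B₀) * (P ⊗ₖ Q) = (α * β) • (P ⊗ₖ Q) := by
    rw [← Matrix.mul_kronecker_mul, ← Matrix.mul_kronecker_mul,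
      ← Matrix.mul_kronecker_mul]
    simp only [Matrix.mul_one, Matrix.one_mul]
    rw [proj_mul_proj, proj_mul_proj, Matrix.smul_kronecker,
      Matrix.kronecker_smul, smul_smul]
  have hA' : (P ⊗ₖ Q) * (A₀ ⊗ₖ 1) * (P ⊗ₖ Q) = α • (P ⊗ₖ Q) := by
    rw [← Matrix.mul_kronecker_mul, ← Matrix.mul_kronecker_mul]
    simp only [Matrix.mul_one, Matrix.one_mul]
    rw [proj_mul_proj, proj_mul_self _ (hb k), Matrix.smul_kronecker]
  have hB' : (P ⊗ₖ Q) * (1 ⊗ₖ B₀) * (P ⊗ₖ Q) = β • (P ⊗ₖ Q) := by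
    rw [← Matrix.mul_kronecker_mul, ← Matrix.mul_kronecker_mul]
    simp only [Matrix.mul_one, Matrix.one_mul]
    rw [proj_mul_proj, proj_mul_self _ (ha k), Matrix.kronecker_smul]
  rw [hAB, hA', hB', Matrix.mul_smul, Matrix.mul_smul, Matrix.mul_smul,
    Matrix.trace_smul, Matrix.trace_smul, Matrix.trace_smul]
  simp only [smul_eq_mul]
  ring
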